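/- For every x ∈ m and every λ ∈ ℂ, the kernel of the complex bilinear form B_x^λ(y1,y2) = ⟨x + λa, [y1,y2]⟩ on m^ℂ(x) equals the projection ((g^ℂ)^{x+λa})_{m^ℂ} of the centralizer of x + λa in g^ℂ onto m^ℂ along k^ℂ; that is, {y ∈ m^ℂ(x) : ⟨x+λa,[y,y']⟩ = 0 for all y' ∈ m^ℂ(x)} = ((g^ℂ)^{x+λa})_{m^ℂ}, and in particular ((g^ℂ)^{x+λa})_{m^ℂ} ⊆ m^ℂ(x). -/

import Mathlib

open Module TensorProduct

set_option maxHeartbeats 1600000 in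
theorem stmt3 {g : Type*} [LieRing g] [LieAlgebra ℝ g] [FiniteDimensional ℝ g]
    -- an ad-invariant inner product on g
    (B : g →ₗ[ℝ] g →ₗ[ℝ] ℝ)
    (hsymm : ∀ x y : g, B x y = B y x)
    (hpos : ∀ x : g, x ≠ 0 → 0 < B x x)
    (hinv : ∀ x y z : g, B ⁅z, x⁆ y + B x ⁅z, y⁆ = 0)
    -- k = g^a and m = k^⊥
    (a : g) (k m : Submodule ℝ g)
    (hk : ∀ z : g, z ∈ k ↔ ⁅a, z⁆ = 0)
    (hm : ∀ y : g, y ∈ m ↔ ∀ z ∈ k, B z y = 0)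
    -- the ℂ-bilinear extension of B to the complexification g^ℂ = ℂ ⊗[ℝ] g
    (Bc : (ℂ ⊗[ℝ] g) →ₗ[ℂ] (ℂ ⊗[ℝ] g) →ₗ[ℂ] ℂ)
    (hBc : ∀ x y : g, Bc ((1:ℂ) ⊗ₜ[ℝ] x) ((1:ℂ) ⊗ₜ[ℝ] y) = (B x y : ℂ))
    -- the projection of g^ℂ onto m^ℂ along k^ℂ
    (πC : (ℂ ⊗[ℝ] g) →ₗ[ℂ] (ℂ ⊗[ℝ] g))
    (hπm : ∀ X : ℂ ⊗[ℝ] g, πC X ∈ Submodule.baseChange ℂ m)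
    (hπk : ∀ X : ℂ ⊗[ℝ] g, X - πC X ∈ Submodule.baseChange ℂ k) :
    ∀ x ∈ m, ∀ Λ : ℂ,
      ({Y : ℂ ⊗[ℝ] g | Y ∈ Submodule.baseChange ℂ m ∧
          ⁅((1:ℂ) ⊗ₜ[ℝ] x : ℂ ⊗[ℝ] g), Y⁆ ∈ Submodule.baseChange ℂ m ∧
          ∀ Y' : ℂ ⊗[ℝ] g, Y' ∈ Submodule.baseChange ℂ m →
            ⁅((1:ℂ) ⊗ₜ[ℝ] x : ℂ ⊗[ℝ] g), Y'⁆ ∈ Submodule.baseChange ℂ m →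
            Bc ((1:ℂ) ⊗ₜ[ℝ] x + Λ • ((1:ℂ) ⊗ₜ[ℝ] a)) ⁅Y, Y'⁆ = 0}
        = πC '' {Z : ℂ ⊗[ℝ] g | ⁅((1:ℂ) ⊗ₜ[ℝ] x + Λ • ((1:ℂ) ⊗ₜ[ℝ] a) : ℂ ⊗[ℝ] g), Z⁆ = 0})
      ∧ (πC '' {Z : ℂ ⊗[ℝ] g | ⁅((1:ℂ) ⊗ₜ[ℝ] x + Λ • ((1:ℂ) ⊗ₜ[ℝ] a) : ℂ ⊗[ℝ] g), Z⁆ = 0}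
          ⊆ {Y : ℂ ⊗[ℝ] g | Y ∈ Submodule.baseChange ℂ m ∧
              ⁅((1:ℂ) ⊗ₜ[ℝ] x : ℂ ⊗[ℝ] g), Y⁆ ∈ Submodule.baseChange ℂ m}) := by
  classical
  -- basic bracket computation in the base change
  have hbr : ∀ u v : g, ⁅((1:ℂ) ⊗ₜ[ℝ] u : ℂ ⊗[ℝ] g), (1:ℂ) ⊗ₜ[ℝ] v⁆ = (1:ℂ) ⊗ₜ[ℝ] ⁅u,v⁆ := by
    intro u v; rw [LieAlgebra.ExtendScalars.bracket_tmul, mul_one]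
  have hsl : ∀ (c : ℂ) (X Y : ℂ ⊗[ℝ] g), ⁅c • X, Y⁆ = c • ⁅X, Y⁆ := fun c X Y => smul_lie c X Y
  have hls : ∀ (c : ℂ) (X Y : ℂ ⊗[ℝ] g), ⁅X, c • Y⁆ = c • ⁅X, Y⁆ := fun c X Y => lie_smul c X Y
  have hal : ∀ X Y Z : ℂ ⊗[ℝ] g, ⁅X + Y, Z⁆ = ⁅X, Z⁆ + ⁅Y, Z⁆ := fun X Y Z => add_lie X Y Z
  have hla : ∀ X Y Z : ℂ ⊗[ℝ] g, ⁅X, Y + Z⁆ = ⁅X, Y⁆ + ⁅X, Z⁆ := fun X Y Z => lie_add X Y Z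
  have hlz : ∀ X : ℂ ⊗[ℝ] g, ⁅X, (0 : ℂ ⊗[ℝ] g)⁆ = 0 := fun X => lie_zero X
  have hzl : ∀ X : ℂ ⊗[ℝ] g, ⁅(0 : ℂ ⊗[ℝ] g), X⁆ = 0 := fun X => zero_lie X
  have hsubl : ∀ X Y Z : ℂ ⊗[ℝ] g, ⁅X - Y, Z⁆ = ⁅X, Z⁆ - ⁅Y, Z⁆ := fun X Y Z => sub_lie X Y Z
  have hlsub : ∀ X Y Z : ℂ ⊗[ℝ] g, ⁅X, Y - Z⁆ = ⁅X, Y⁆ - ⁅X, Z⁆ := fun X Y Z => lie_sub X Y Z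
  have hskew : ∀ X Y : ℂ ⊗[ℝ] g, ⁅X, Y⁆ = -⁅Y, X⁆ := fun X Y => (lie_skew X Y).symm
  -- every element of the complexification decomposes as 1 ⊗ u + I • (1 ⊗ v)
  have hdec : ∀ X : ℂ ⊗[ℝ] g, ∃ u v : g,
      X = (1:ℂ) ⊗ₜ[ℝ] u + Complex.I • ((1:ℂ) ⊗ₜ[ℝ] v) := by
    intro X
    induction X using TensorProduct.induction_on with
    | zero => exact ⟨0, 0, by simp⟩
    | tmul z v =>
      refine ⟨z.re • v, z.im • v, ?_⟩
      rw [tmul_smul, tmul_smul, ← algebraMap_smul ℂ z.re, ← algebraMap_smul ℂ z.im,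
        smul_smul, ← add_smul, mul_comm]
      norm_num [Complex.re_add_im, smul_tmul', smul_eq_mul]
    | add X Y hX hY =>
      obtain ⟨u1, v1, rfl⟩ := hX
      obtain ⟨u2, v2, rfl⟩ := hY
      exact ⟨u1 + u2, v1 + v2, by rw [tmul_add, tmul_add, smul_add]; abel⟩
  -- induction principle for base-changed submodules
  have hind : ∀ (p : Submodule ℝ g) (P : (ℂ ⊗[ℝ] g) → Prop),
      (∀ v ∈ p, P ((1:ℂ) ⊗ₜ[ℝ] v)) → P 0 → (∀ X Y, P X → P Y → P (X + Y)) →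
      (∀ (c : ℂ) (X), P X → P (c • X)) → ∀ X ∈ Submodule.baseChange ℂ p, P X := by
    intro p P hgen h0 hadd hsmul X hX
    rw [Submodule.baseChange_eq_span] at hX
    refine Submodule.span_induction (p := fun X _ => P X) ?_ h0
      (fun a b _ _ => hadd a b) (fun c a _ => hsmul c a) hX
    rintro _ ⟨v, hv, rfl⟩
    exact hgen v hv
  -- real lemmas
  have ha : a ∈ k := (hk a).2 (lie_self a)
  have hkk : ∀ z ∈ k, ∀ w ∈ k, ⁅z, w⁆ ∈ k := by
    intro z hz w hw
    refine (hk _).2 ?_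
    rw [leibniz_lie, (hk z).1 hz, (hk w).1 hw]
    simp
  have hkm : ∀ z ∈ k, ∀ y ∈ m, ⁅z, y⁆ ∈ m := by
    intro z hz y hy
    refine (hm _).2 ?_
    intro w hw
    have h1 := hinv w y z
    have h2 : B ⁅z, w⁆ y = 0 := (hm y).1 hy _ (hkk z hz w hw)
    linarith
  -- symmetry of Bc
  have hBcsymm : ∀ X Y, Bc X Y = Bc Y X := by
    intro X Y
    obtain ⟨u1, v1, rfl⟩ := hdec X
    obtain ⟨u2, v2, rfl⟩ := hdec Y
    simp only [map_add, map_smul, LinearMap.add_apply, LinearMap.smul_apply, hBc, smul_eq_mul]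
    rw [hsymm u1 u2, hsymm u1 v2, hsymm v1 u2, hsymm v1 v2]
    ring
  -- invariance of Bc
  have hinvC : ∀ u v w : g, (B ⁅w, u⁆ v : ℂ) = -(B u ⁅w, v⁆ : ℂ) := by
    intro u v w
    have h : B ⁅w, u⁆ v = -(B u ⁅w, v⁆) := by linarith [hinv u v w]
    exact_mod_cast h
  have hBcinv0 : ∀ (z : g) (X Y : ℂ ⊗[ℝ] g),
      Bc ⁅((1:ℂ) ⊗ₜ[ℝ] z : ℂ ⊗[ℝ] g), X⁆ Y = -Bc X ⁅((1:ℂ) ⊗ₜ[ℝ] z : ℂ ⊗[ℝ] g), Y⁆ := by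
    intro z X Y
    obtain ⟨x1, x2, rfl⟩ := hdec X
    obtain ⟨y1, y2, rfl⟩ := hdec Y
    rw [hla, hls, hla, hls, hbr, hbr, hbr, hbr]
    simp only [map_add, map_smul, LinearMap.add_apply, LinearMap.smul_apply, hBc, smul_eq_mul]
    rw [hinvC x1 y1 z, hinvC x1 y2 z, hinvC x2 y1 z, hinvC x2 y2 z]
    ring
  have hBcinv : ∀ Z X Y : ℂ ⊗[ℝ] g, Bc ⁅Z, X⁆ Y = -Bc X ⁅Z, Y⁆ := by
    intro Z X Y
    obtain ⟨z1, z2, rfl⟩ := hdec Z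
    rw [hal, hsl, hal, hsl]
    simp only [map_add, map_smul, LinearMap.add_apply, LinearMap.smul_apply, smul_eq_mul]
    rw [hBcinv0 z1 X Y, hBcinv0 z2 X Y]
    ring
  -- nondegeneracy of Bc
  have hnon : ∀ X : ℂ ⊗[ℝ] g, (∀ W, Bc X W = 0) → X = 0 := by
    intro X hX
    obtain ⟨u, v, rfl⟩ := hdec X
    have h1 : ∀ w : g, B u w = 0 ∧ B v w = 0 := by
      intro w
      have h := hX ((1:ℂ) ⊗ₜ[ℝ] w)
      simp only [map_add, map_smul, LinearMap.add_apply, LinearMap.smul_apply, hBc,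
        smul_eq_mul] at h
      constructor
      · have := congrArg Complex.re h; simpa using this
      · have := congrArg Complex.im h; simpa using this
    have hu : u = 0 := by
      by_contra h; exact absurd (h1 u).1 (ne_of_gt (hpos u h))
    have hv : v = 0 := by
      by_contra h; exact absurd (h1 v).2 (ne_of_gt (hpos v h))
    simp [hu, hv]
  -- orthogonality of the base changes of k and m
  have horth : ∀ Z ∈ Submodule.baseChange ℂ k, ∀ Y ∈ Submodule.baseChange ℂ m, Bc Z Y = 0 := by
    intro Z hZ
    refine hind k (fun Z => ∀ Y ∈ Submodule.baseChange ℂ m, Bc Z Y = 0) ?_ ?_ ?_ ?_ Z hZ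
    · intro z hz Y hY
      beta_reduce
      refine hind m (fun Y => Bc ((1:ℂ) ⊗ₜ[ℝ] z) Y = 0) ?_ ?_ ?_ ?_ Y hY
      · intro y hy
        beta_reduce
        rw [hBc]
        exact_mod_cast (hm y).1 hy z hz
      · beta_reduce; rw [map_zero]
      · intro X Y h1 h2; beta_reduce
        rw [map_add, h1, h2, add_zero]
      · intro c X h1; beta_reduce
        rw [map_smul, h1, smul_zero]
    · intro Y hY
      rw [map_zero, LinearMap.zero_apply]
    · intro X Y h1 h2 W hW; beta_reduce
      rw [map_add, LinearMap.add_apply, h1 W hW, h2 W hW, add_zero]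
    · intro c X h1 W hW; beta_reduce
      rw [map_smul, LinearMap.smul_apply, h1 W hW, smul_zero]
  -- the bracket of k^ℂ with m^ℂ lies in m^ℂ
  have hlieKM : ∀ Z ∈ Submodule.baseChange ℂ k, ∀ Y ∈ Submodule.baseChange ℂ m,
      ⁅Z, Y⁆ ∈ Submodule.baseChange ℂ m := by
    intro Z hZ
    refine hind k (fun Z => ∀ Y ∈ Submodule.baseChange ℂ m, ⁅Z, Y⁆ ∈ Submodule.baseChange ℂ m)
      ?_ ?_ ?_ ?_ Z hZ
    · intro z hz Y hY
      beta_reduce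
      refine hind m (fun Y => ⁅((1:ℂ) ⊗ₜ[ℝ] z : ℂ ⊗[ℝ] g), Y⁆ ∈ Submodule.baseChange ℂ m)
        ?_ ?_ ?_ ?_ Y hY
      · intro y hy
        beta_reduce
        rw [hbr]
        exact Submodule.tmul_mem_baseChange_of_mem 1 (hkm z hz y hy)
      · beta_reduce; rw [hlz _]; exact Submodule.zero_mem _
      · intro X Y h1 h2; beta_reduce
        rw [hla]; exact Submodule.add_mem _ h1 h2
      · intro c X h1; beta_reduce
        rw [hls]; exact Submodule.smul_mem _ c h1
    · intro Y hY
      rw [hzl _]; exact Submodule.zero_mem _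
    · intro X Y h1 h2 W hW; beta_reduce
      rw [hal]; exact Submodule.add_mem _ (h1 W hW) (h2 W hW)
    · intro c X h1 W hW; beta_reduce
      rw [hsl]; exact Submodule.smul_mem _ c (h1 W hW)
  -- 1 ⊗ a annihilates k^ℂ
  have hak0 : ∀ Z ∈ Submodule.baseChange ℂ k, ⁅((1:ℂ) ⊗ₜ[ℝ] a : ℂ ⊗[ℝ] g), Z⁆ = 0 := by
    intro Z hZ
    refine hind k (fun Z => ⁅((1:ℂ) ⊗ₜ[ℝ] a : ℂ ⊗[ℝ] g), Z⁆ = 0) ?_ ?_ ?_ ?_ Z hZ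
    · intro z hz; beta_reduce; rw [hbr, (hk z).1 hz]; exact tmul_zero _ _
    · beta_reduce; rw [hlz _]
    · intro X Y h1 h2; beta_reduce; rw [hla, h1, h2, add_zero]
    · intro c X h1; beta_reduce; rw [hls, h1, smul_zero]
  -- an element of both k^ℂ and m^ℂ is zero
  have hKM0 : ∀ q : ℂ ⊗[ℝ] g, q ∈ Submodule.baseChange ℂ k → q ∈ Submodule.baseChange ℂ m →
      q = 0 := by
    intro q hqK hqM
    refine hnon q ?_
    intro W
    have h1 : Bc q (πC W) = 0 := horth q hqK _ (hπm W)
    have h2 : Bc q (W - πC W) = 0 := by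
      rw [hBcsymm]
      exact horth _ (hπk W) q hqM
    have h3 : Bc q W = Bc q (πC W) + Bc q (W - πC W) := by
      rw [← map_add]; congr 1; abel
    rw [h3, h1, h2, add_zero]
  -- anything orthogonal to k^ℂ lies in m^ℂ
  have hperpM : ∀ X : ℂ ⊗[ℝ] g, (∀ Z ∈ Submodule.baseChange ℂ k, Bc Z X = 0) →
      X ∈ Submodule.baseChange ℂ m := by
    intro X hX
    have hq0 : X - πC X = 0 := by
      refine hnon _ ?_
      intro W
      have h1 : Bc (X - πC X) (πC W) = 0 := horth _ (hπk X) _ (hπm W)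
      have h2 : Bc (X - πC X) (W - πC W) = 0 := by
        rw [hBcsymm]
        have e1 : Bc (W - πC W) X = 0 := hX _ (hπk W)
        have e2 : Bc (W - πC W) (πC X) = 0 := horth _ (hπk W) _ (hπm X)
        rw [map_sub, e1, e2, sub_zero]
      have h3 : Bc (X - πC X) W = Bc (X - πC X) (πC W) + Bc (X - πC X) (W - πC W) := by
        rw [← map_add]; congr 1; abel
      rw [h3, h1, h2, add_zero]
    have hXπ : X = πC X := by rwa [sub_eq_zero] at hq0
    rw [hXπ]; exact hπm X
  -- Bc as a bilinear form : reflexivity and nondegeneracy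
  have hrefl : LinearMap.IsRefl Bc := by
    intro X Y h
    rw [hBcsymm]; exact h
  have hnondeg : LinearMap.BilinForm.Nondegenerate Bc :=
    hrefl.nondegenerate_iff_separatingLeft.2 hnon
  -- main argument
  intro x hx Λ
  have hxM : ((1:ℂ) ⊗ₜ[ℝ] x : ℂ ⊗[ℝ] g) ∈ Submodule.baseChange ℂ m :=
    Submodule.tmul_mem_baseChange_of_mem 1 hx
  have haK : ((1:ℂ) ⊗ₜ[ℝ] a : ℂ ⊗[ℝ] g) ∈ Submodule.baseChange ℂ k :=
    Submodule.tmul_mem_baseChange_of_mem 1 ha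
  set W : Submodule ℂ (ℂ ⊗[ℝ] g) :=
    Submodule.map (LieAlgebra.ad ℂ (ℂ ⊗[ℝ] g) ((1:ℂ) ⊗ₜ[ℝ] x)) (Submodule.baseChange ℂ k)
    with hWdef
  -- bracketing k^ℂ with 1 ⊗ x lands in m^ℂ
  have hxK_lie : ∀ Z ∈ Submodule.baseChange ℂ k,
      ⁅((1:ℂ) ⊗ₜ[ℝ] x : ℂ ⊗[ℝ] g), Z⁆ ∈ Submodule.baseChange ℂ m := by
    intro Z hZ
    have h1 : ⁅Z, ((1:ℂ) ⊗ₜ[ℝ] x : ℂ ⊗[ℝ] g)⁆ ∈ Submodule.baseChange ℂ m :=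
      hlieKM Z hZ _ hxM
    have h2 : ⁅((1:ℂ) ⊗ₜ[ℝ] x : ℂ ⊗[ℝ] g), Z⁆ = -⁅Z, ((1:ℂ) ⊗ₜ[ℝ] x : ℂ ⊗[ℝ] g)⁆ :=
      (lie_skew _ _).symm
    rw [h2]; exact Submodule.neg_mem _ h1
  have hWM : ∀ w ∈ W, w ∈ Submodule.baseChange ℂ m := by
    rintro w ⟨ζ, hζ, rfl⟩
    exact hxK_lie ζ hζ
  -- characterization of m^ℂ(x) as an orthogonal complement
  have hNchar : ∀ Y' : ℂ ⊗[ℝ] g,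
      (Y' ∈ Submodule.baseChange ℂ m ∧
        ⁅((1:ℂ) ⊗ₜ[ℝ] x : ℂ ⊗[ℝ] g), Y'⁆ ∈ Submodule.baseChange ℂ m) ↔
      Y' ∈ LinearMap.BilinForm.orthogonal Bc (W ⊔ Submodule.baseChange ℂ k) := by
    intro Y'
    rw [LinearMap.BilinForm.mem_orthogonal_iff]
    constructor
    · rintro ⟨h1, h2⟩
      intro n hn
      obtain ⟨w, hw, z, hz, rfl⟩ := Submodule.mem_sup.1 hn
      obtain ⟨ζ, hζ, rfl⟩ := Submodule.mem_map.1 hw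
      rw [map_add, LinearMap.add_apply]
      have e1 : Bc (LieAlgebra.ad ℂ (ℂ ⊗[ℝ] g) ((1:ℂ) ⊗ₜ[ℝ] x) ζ) Y' = 0 := by
        have h3 : Bc ⁅((1:ℂ) ⊗ₜ[ℝ] x : ℂ ⊗[ℝ] g), ζ⁆ Y'
            = -Bc ζ ⁅((1:ℂ) ⊗ₜ[ℝ] x : ℂ ⊗[ℝ] g), Y'⁆ := hBcinv _ ζ Y'
        rw [LieAlgebra.ad_apply, h3, horth ζ hζ _ h2, neg_zero]
      have e2 : Bc z Y' = 0 := horth z hz Y' h1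
      rw [e1, e2, add_zero]
    · intro hY'
      have hY'' : ∀ n ∈ W ⊔ Submodule.baseChange ℂ k, Bc n Y' = 0 := fun n hn => hY' n hn
      have hYm : Y' ∈ Submodule.baseChange ℂ m :=
        hperpM Y' (fun z hz => hY'' z (Submodule.mem_sup_right hz))
      refine ⟨hYm, ?_⟩
      refine hperpM _ ?_
      intro z hz
      have e1 : Bc ⁅((1:ℂ) ⊗ₜ[ℝ] x : ℂ ⊗[ℝ] g), z⁆ Y' = 0 :=
        hY'' _ (Submodule.mem_sup_left
          (Submodule.mem_map.2 ⟨z, hz, LieAlgebra.ad_apply _ _ _ _⟩))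
      have e2 := hBcinv ((1:ℂ) ⊗ₜ[ℝ] x : ℂ ⊗[ℝ] g) z Y'
      rw [e1] at e2
      exact neg_eq_zero.mp e2.symm
  -- the projection of the centralizer satisfies all three conditions
  have himg : ∀ Z : ℂ ⊗[ℝ] g,
      ⁅((1:ℂ) ⊗ₜ[ℝ] x + Λ • ((1:ℂ) ⊗ₜ[ℝ] a) : ℂ ⊗[ℝ] g), Z⁆ = 0 →
      (πC Z ∈ Submodule.baseChange ℂ m ∧
       ⁅((1:ℂ) ⊗ₜ[ℝ] x : ℂ ⊗[ℝ] g), πC Z⁆ ∈ Submodule.baseChange ℂ m ∧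
       ∀ Y' : ℂ ⊗[ℝ] g, Y' ∈ Submodule.baseChange ℂ m →
         ⁅((1:ℂ) ⊗ₜ[ℝ] x : ℂ ⊗[ℝ] g), Y'⁆ ∈ Submodule.baseChange ℂ m →
         Bc ((1:ℂ) ⊗ₜ[ℝ] x + Λ • ((1:ℂ) ⊗ₜ[ℝ] a)) ⁅πC Z, Y'⁆ = 0) := by
    intro Z hZ0
    have hζK : Z - πC Z ∈ Submodule.baseChange ℂ k := hπk Z
    have hYM : πC Z ∈ Submodule.baseChange ℂ m := hπm Z
    have hiaπ : ⁅((1:ℂ) ⊗ₜ[ℝ] a : ℂ ⊗[ℝ] g), πC Z⁆ ∈ Submodule.baseChange ℂ m :=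
      hlieKM _ haK _ hYM
    have hiaZ : ⁅((1:ℂ) ⊗ₜ[ℝ] a : ℂ ⊗[ℝ] g), Z⁆ ∈ Submodule.baseChange ℂ m := by
      have e : ⁅((1:ℂ) ⊗ₜ[ℝ] a : ℂ ⊗[ℝ] g), Z⁆
          = ⁅((1:ℂ) ⊗ₜ[ℝ] a : ℂ ⊗[ℝ] g), πC Z⁆ + ⁅((1:ℂ) ⊗ₜ[ℝ] a : ℂ ⊗[ℝ] g), Z - πC Z⁆ := by
        rw [← hla]; congr 1; abel
      rw [e, hak0 _ hζK, add_zero]; exact hiaπ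
    have hxZ : ⁅((1:ℂ) ⊗ₜ[ℝ] x : ℂ ⊗[ℝ] g), Z⁆ ∈ Submodule.baseChange ℂ m := by
      have h0 : ⁅((1:ℂ) ⊗ₜ[ℝ] x : ℂ ⊗[ℝ] g), Z⁆
          + Λ • ⁅((1:ℂ) ⊗ₜ[ℝ] a : ℂ ⊗[ℝ] g), Z⁆ = 0 := by
        rw [← hsl, ← hal]; exact hZ0
      have e : ⁅((1:ℂ) ⊗ₜ[ℝ] x : ℂ ⊗[ℝ] g), Z⁆
          = -(Λ • ⁅((1:ℂ) ⊗ₜ[ℝ] a : ℂ ⊗[ℝ] g), Z⁆) := eq_neg_of_add_eq_zero_left h0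
      rw [e]
      exact Submodule.neg_mem _ (Submodule.smul_mem _ _ hiaZ)
    have hxπ : ⁅((1:ℂ) ⊗ₜ[ℝ] x : ℂ ⊗[ℝ] g), πC Z⁆ ∈ Submodule.baseChange ℂ m := by
      have e : ⁅((1:ℂ) ⊗ₜ[ℝ] x : ℂ ⊗[ℝ] g), πC Z⁆
          = ⁅((1:ℂ) ⊗ₜ[ℝ] x : ℂ ⊗[ℝ] g), Z⁆ - ⁅((1:ℂ) ⊗ₜ[ℝ] x : ℂ ⊗[ℝ] g), Z - πC Z⁆ := by
        rw [← hlsub]; congr 1; abel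
      rw [e]
      exact Submodule.sub_mem _ hxZ (hxK_lie _ hζK)
    refine ⟨hYM, hxπ, ?_⟩
    intro Y' hY'M hY'x
    have key1 : Bc ((1:ℂ) ⊗ₜ[ℝ] x + Λ • ((1:ℂ) ⊗ₜ[ℝ] a)) ⁅Z, Y'⁆ = 0 := by
      have h1 := hBcinv Z ((1:ℂ) ⊗ₜ[ℝ] x + Λ • ((1:ℂ) ⊗ₜ[ℝ] a)) Y'
      have h2 : ⁅Z, ((1:ℂ) ⊗ₜ[ℝ] x + Λ • ((1:ℂ) ⊗ₜ[ℝ] a) : ℂ ⊗[ℝ] g)⁆ = 0 := by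
        rw [hskew Z, hZ0, neg_zero]
      rw [h2, map_zero, LinearMap.zero_apply] at h1
      exact neg_eq_zero.mp h1.symm
    have key2 : Bc ((1:ℂ) ⊗ₜ[ℝ] x + Λ • ((1:ℂ) ⊗ₜ[ℝ] a)) ⁅Z - πC Z, Y'⁆ = 0 := by
      have e0 : ⁅Z - πC Z, Y'⁆ ∈ Submodule.baseChange ℂ m := hlieKM _ hζK Y' hY'M
      have ea : Bc ((1:ℂ) ⊗ₜ[ℝ] a) ⁅Z - πC Z, Y'⁆ = 0 := horth _ haK _ e0
      have ex : Bc ((1:ℂ) ⊗ₜ[ℝ] x) ⁅Z - πC Z, Y'⁆ = 0 := by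
        have h1 := hBcinv Y' ((1:ℂ) ⊗ₜ[ℝ] x : ℂ ⊗[ℝ] g) (Z - πC Z)
        have h2 : Bc ⁅((1:ℂ) ⊗ₜ[ℝ] x : ℂ ⊗[ℝ] g), Y'⁆ (Z - πC Z) = 0 := by
          rw [hBcsymm]; exact horth _ hζK _ hY'x
        rw [hskew Y' ((1:ℂ) ⊗ₜ[ℝ] x : ℂ ⊗[ℝ] g), map_neg, LinearMap.neg_apply, h2, neg_zero] at h1
        rw [hskew Y' (Z - πC Z), map_neg, neg_neg] at h1
        exact h1.symm
      rw [map_add, map_smul, LinearMap.add_apply, LinearMap.smul_apply, ea, ex, smul_zero,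
        add_zero]
    have e : ⁅πC Z, Y'⁆ = ⁅Z, Y'⁆ - ⁅Z - πC Z, Y'⁆ := by
      rw [← hsubl]; congr 1; abel
    rw [e, map_sub, key1, key2, sub_zero]
  constructor
  · ext Y
    simp only [Set.mem_setOf_eq, Set.mem_image]
    constructor
    · rintro ⟨hYM, hYx, hker⟩
      have hiaY : ⁅((1:ℂ) ⊗ₜ[ℝ] a : ℂ ⊗[ℝ] g), Y⁆ ∈ Submodule.baseChange ℂ m :=
        hlieKM _ haK Y hYM
      have huM : ⁅((1:ℂ) ⊗ₜ[ℝ] x + Λ • ((1:ℂ) ⊗ₜ[ℝ] a) : ℂ ⊗[ℝ] g), Y⁆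
          ∈ Submodule.baseChange ℂ m := by
        rw [hal, hsl]
        exact Submodule.add_mem _ hYx (Submodule.smul_mem _ _ hiaY)
      have humem : ⁅((1:ℂ) ⊗ₜ[ℝ] x + Λ • ((1:ℂ) ⊗ₜ[ℝ] a) : ℂ ⊗[ℝ] g), Y⁆ ∈
          LinearMap.BilinForm.orthogonal Bc
            (LinearMap.BilinForm.orthogonal Bc (W ⊔ Submodule.baseChange ℂ k)) := by
        rw [LinearMap.BilinForm.mem_orthogonal_iff]
        intro n hn
        rw [hBcsymm]
        have h2 := (hNchar n).2 hn
        have h1 : Bc ⁅Y, ((1:ℂ) ⊗ₜ[ℝ] x + Λ • ((1:ℂ) ⊗ₜ[ℝ] a) : ℂ ⊗[ℝ] g)⁆ n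
            = -Bc ((1:ℂ) ⊗ₜ[ℝ] x + Λ • ((1:ℂ) ⊗ₜ[ℝ] a)) ⁅Y, n⁆ := hBcinv Y _ n
        have h3 : Bc ((1:ℂ) ⊗ₜ[ℝ] x + Λ • ((1:ℂ) ⊗ₜ[ℝ] a)) ⁅Y, n⁆ = 0 := hker n h2.1 h2.2
        rw [hskew ((1:ℂ) ⊗ₜ[ℝ] x + Λ • ((1:ℂ) ⊗ₜ[ℝ] a) : ℂ ⊗[ℝ] g) Y, map_neg,
          LinearMap.neg_apply, h1, neg_neg, h3]
      rw [LinearMap.BilinForm.orthogonal_orthogonal hnondeg hrefl] at humem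
      obtain ⟨w, hw, z, hz, huv⟩ := Submodule.mem_sup.1 humem
      obtain ⟨ζ, hζK, rfl⟩ := Submodule.mem_map.1 hw
      have hadx : LieAlgebra.ad ℂ (ℂ ⊗[ℝ] g) ((1:ℂ) ⊗ₜ[ℝ] x) ζ
          = ⁅((1:ℂ) ⊗ₜ[ℝ] x : ℂ ⊗[ℝ] g), ζ⁆ := LieAlgebra.ad_apply _ _ _ _
      rw [hadx] at huv
      have hwM : ⁅((1:ℂ) ⊗ₜ[ℝ] x : ℂ ⊗[ℝ] g), ζ⁆ ∈ Submodule.baseChange ℂ m := hxK_lie ζ hζK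
      have hzM : z ∈ Submodule.baseChange ℂ m := by
        have e : z = ⁅((1:ℂ) ⊗ₜ[ℝ] x + Λ • ((1:ℂ) ⊗ₜ[ℝ] a) : ℂ ⊗[ℝ] g), Y⁆
            - ⁅((1:ℂ) ⊗ₜ[ℝ] x : ℂ ⊗[ℝ] g), ζ⁆ := by
          rw [← huv]; abel
        rw [e]; exact Submodule.sub_mem _ huM hwM
      have hz0 : z = 0 := hKM0 z hz hzM
      have hu_eq : ⁅((1:ℂ) ⊗ₜ[ℝ] x + Λ • ((1:ℂ) ⊗ₜ[ℝ] a) : ℂ ⊗[ℝ] g), Y⁆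
          = ⁅((1:ℂ) ⊗ₜ[ℝ] x : ℂ ⊗[ℝ] g), ζ⁆ := by
        rw [← huv, hz0, add_zero]
      refine ⟨Y - ζ, ?_, ?_⟩
      · show ⁅((1:ℂ) ⊗ₜ[ℝ] x + Λ • ((1:ℂ) ⊗ₜ[ℝ] a) : ℂ ⊗[ℝ] g), Y - ζ⁆ = 0
        rw [hlsub]
        have hpζ : ⁅((1:ℂ) ⊗ₜ[ℝ] x + Λ • ((1:ℂ) ⊗ₜ[ℝ] a) : ℂ ⊗[ℝ] g), ζ⁆
            = ⁅((1:ℂ) ⊗ₜ[ℝ] x : ℂ ⊗[ℝ] g), ζ⁆ := by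
          rw [hal, hsl, hak0 ζ hζK, smul_zero, add_zero]
        rw [hpζ, hu_eq, sub_self]
      · have hmem1 : πC (Y - ζ) - Y ∈ Submodule.baseChange ℂ k := by
          have t1 : (Y - ζ) - πC (Y - ζ) ∈ Submodule.baseChange ℂ k := hπk _
          have e : πC (Y - ζ) - Y = -((Y - ζ) - πC (Y - ζ)) + (-ζ) := by abel
          rw [e]
          exact Submodule.add_mem _ (Submodule.neg_mem _ t1) (Submodule.neg_mem _ hζK)
        have hmem2 : πC (Y - ζ) - Y ∈ Submodule.baseChange ℂ m :=
          Submodule.sub_mem _ (hπm _) hYM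
        have h0 := hKM0 _ hmem1 hmem2
        rwa [sub_eq_zero] at h0
    · rintro ⟨Z, hZ0, rfl⟩
      exact himg Z hZ0
  · rintro Y ⟨Z, hZ0, rfl⟩
    exact ⟨(himg Z hZ0).1, (himg Z hZ0).2.1⟩
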